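/- Let G be a non-trivial semidirect product of C_{p^n} by C_2 (i.e. a non-abelian group G = C_{p^n} ⋊ C_2), where p is an odd prime and n a positive integer. Then ψ(G) = (p^{2n+1} + 2p^{n+1} + 2p^n + 1)/(p+1), and ψ(G)/|G|² ≤ 13/36, with equality if and only if p = 3 and n = 1 (i.e. G ≅ S_3). -/

import Mathlib

open Finset

/-- A finite semidirect product of finite groups is finite. -/
noncomputable instance semidirectFintype {N G : Type*} [Group N] [Group G]
    {φ : G →* MulAut N} [Fintype N] [Fintype G] : Fintype (N ⋊[φ] G) :=
  Fintype.ofEquiv (N × G)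
    { toFun := fun p => ⟨p.1, p.2⟩
      invFun := fun x => (x.left, x.right)
      left_inv := fun _ => rfl
      right_inv := fun _ => rfl }

lemma sum_orderOf_cyclic (α : Type*) [Group α] [Fintype α] [IsCyclic α] :
    ∑ x : α, orderOf x = ∑ d ∈ (Fintype.card α).divisors, d * d.totient := by
  classical
  rw [← Finset.sum_fiberwise_of_maps_to (g := orderOf) (t := (Fintype.card α).divisors)
      (fun x _ => Nat.mem_divisors.mpr ⟨orderOf_dvd_card, Fintype.card_ne_zero⟩)]
  refine Finset.sum_congr rfl fun d hd => ?_
  have hcard := IsCyclic.card_orderOf_eq_totient (α := α) (Nat.mem_divisors.mp hd).1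
  calc ∑ x ∈ univ.filter (orderOf · = d), orderOf x
      = ∑ x ∈ univ.filter (orderOf · = d), d := by
        refine Finset.sum_congr rfl fun x hx => ?_
        exact (Finset.mem_filter.mp hx).2
    _ = d * d.totient := by rw [Finset.sum_const, smul_eq_mul, ← hcard, mul_comm]

lemma geom_psi (p : ℕ) (hp : p.Prime) (n : ℕ) :
    (∑ d ∈ (p ^ n).divisors, d * d.totient) * (p + 1) = p ^ (2 * n + 1) + 1 := by
  rw [Nat.sum_divisors_prime_pow hp]
  have hp1 := hp.pos
  induction n with
  | zero => simp
  | succ m ih =>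
    rw [Finset.sum_range_succ, add_mul, ih, Nat.totient_prime_pow hp (Nat.succ_pos m)]
    obtain ⟨k, hk⟩ : ∃ k, p = k + 1 := ⟨p - 1, by omega⟩
    have hsub : p - 1 = k := by omega
    rw [Nat.succ_sub_one, hsub]
    have key : p ^ (m + 1) * (p ^ m * k) * (p + 1)
        = p ^ (2 * m + 1) * (p * p) - p ^ (2 * m + 1) := by
      symm
      apply Nat.sub_eq_of_eq_add
      subst hk; ring
    rw [key]
    have h4 : p ^ (2*m+1) ≤ p ^ (2*m+1) * (p*p) :=
      Nat.le_mul_of_pos_right _ (Nat.mul_pos hp1 hp1)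
    have h5 : p ^ (2*m+1) * (p*p) = p ^ (2*(m+1)+1) := by ring
    omega

lemma zmod_sq_one (p n : ℕ) (hp : p.Prime) (hodd : Odd p) [NeZero (p ^ n)]
    (u : ZMod (p ^ n)) (hu : u * u = 1) (hu1 : u ≠ 1) : u = -1 := by
  have hv : ∀ w : ℤ, w = (u.val : ℤ) → ((w : ℤ) : ZMod (p ^ n)) = u := by
    rintro w rfl
    rw [Int.cast_natCast]; exact ZMod.natCast_rightInverse u
  set v : ℤ := (u.val : ℤ)
  have hcast : ((v : ℤ) : ZMod (p ^ n)) = u := hv v rfl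
  have hdvd : ((p ^ n : ℕ) : ℤ) ∣ (v - 1) * (v + 1) := by
    rw [← ZMod.intCast_zmod_eq_zero_iff_dvd]
    push_cast
    rw [hcast]
    linear_combination hu
  have hpZ : Prime (p : ℤ) := Nat.prime_iff_prime_int.mp hp
  have hNdvd : ((p : ℤ) ^ n) ∣ (v - 1) * (v + 1) := by
    rwa [Nat.cast_pow] at hdvd
  have hp3 : 3 ≤ p := by
    rcases hodd with ⟨k, hk⟩
    have := hp.two_le
    omega
  by_cases h1 : (p : ℤ) ∣ (v + 1)
  · have h2 : ¬ (p : ℤ) ∣ (v - 1) := by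
      intro h2
      have hdvd2 : (p : ℤ) ∣ 2 := by
        have := dvd_sub h1 h2
        simpa using this
      have := Int.le_of_dvd (by norm_num) hdvd2
      omega
    have hcop : IsCoprime ((p : ℤ) ^ n) (v - 1) :=
      IsCoprime.pow_left (hpZ.coprime_iff_not_dvd.mpr h2)
    have hdvd2 : ((p : ℤ) ^ n) ∣ (v + 1) := by
      rw [mul_comm] at hNdvd
      exact hcop.dvd_of_dvd_mul_right hNdvd
    have hz : ((v + 1 : ℤ) : ZMod (p ^ n)) = 0 := by
      rw [ZMod.intCast_zmod_eq_zero_iff_dvd]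
      rwa [Nat.cast_pow]
    push_cast at hz
    rw [hcast] at hz
    linear_combination hz
  · have hcop : IsCoprime ((p : ℤ) ^ n) (v + 1) :=
      IsCoprime.pow_left (hpZ.coprime_iff_not_dvd.mpr h1)
    have hdvd2 : ((p : ℤ) ^ n) ∣ (v - 1) := hcop.dvd_of_dvd_mul_right hNdvd
    have hz : ((v - 1 : ℤ) : ZMod (p ^ n)) = 0 := by
      rw [ZMod.intCast_zmod_eq_zero_iff_dvd]
      rwa [Nat.cast_pow]
    push_cast at hz
    rw [hcast] at hz
    exact absurd (by linear_combination hz) hu1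

lemma mulaut_apply_eq (m : ℕ) [NeZero m] (σ : MulAut (Multiplicative (ZMod m)))
    (a : Multiplicative (ZMod m)) :
    σ a = Multiplicative.ofAdd (a.toAdd * (σ (Multiplicative.ofAdd 1)).toAdd) := by
  have ha : a = (Multiplicative.ofAdd (1 : ZMod m)) ^ (a.toAdd.val) := by
    apply Multiplicative.toAdd.injective
    rw [toAdd_pow, toAdd_ofAdd, nsmul_eq_mul, mul_one]
    exact (ZMod.natCast_rightInverse a.toAdd).symm
  conv_lhs => rw [ha]
  rw [map_pow]
  apply Multiplicative.toAdd.injective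
  rw [toAdd_pow, toAdd_ofAdd, nsmul_eq_mul]
  rw [ZMod.natCast_rightInverse a.toAdd]

lemma psi_aux_le (P Q : ℚ) (hP : 3 ≤ P) (hQ : P ≤ Q) :
    36 * (P * Q^2 + 2*P*Q + 2*Q + 1) ≤ 13 * (2*Q)^2 * (P+1) := by
  nlinarith [mul_nonneg (mul_nonneg (by linarith : (0:ℚ) ≤ P) (by linarith : (0:ℚ) ≤ Q))
      (by linarith : (0:ℚ) ≤ Q - 3),
    mul_nonneg (by linarith : (0:ℚ) ≤ Q) (by linarith : (0:ℚ) ≤ Q - P),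
    mul_nonneg (by linarith : (0:ℚ) ≤ 7*Q + 3) (by linarith : (0:ℚ) ≤ Q - 3)]

lemma psi_aux_eq3 (Q : ℚ) (hQ9 : 9 ≤ Q)
    (heq2 : 36 * (3 * Q^2 + 2*3*Q + 2*Q + 1) = 13 * (2*Q)^2 * (3+1)) : False := by
  nlinarith [heq2, hQ9, mul_nonneg (by linarith : (0:ℚ) ≤ Q) (by linarith : (0:ℚ) ≤ Q - 9)]

lemma psi_aux_eq4 (P Q : ℚ) (hP : 4 ≤ P) (hQ : P ≤ Q)
    (heq2 : 36 * (P * Q^2 + 2*P*Q + 2*Q + 1) = 13 * (2*Q)^2 * (P+1)) : False := by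
  nlinarith [heq2,
    mul_pos (mul_pos (by linarith : (0:ℚ) < P) (by linarith : (0:ℚ) < Q))
      (by linarith : (0:ℚ) < Q - 3),
    mul_nonneg (by linarith : (0:ℚ) ≤ Q) (by linarith : (0:ℚ) ≤ Q - P),
    mul_nonneg (by linarith : (0:ℚ) ≤ 7*Q + 3) (by linarith : (0:ℚ) ≤ Q - 3)]

/-- For a non-trivial semidirect product G = C_{p^n} ⋊ C_2 with p an odd prime:
ψ(G)·(p+1) = p^{2n+1} + 2p^{n+1} + 2p^n + 1, ψ''(G) ≤ 13/36,
with equality iff p = 3 and n = 1. -/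
theorem psi_semidirect_C2 (p n : ℕ) (hp : p.Prime) (hodd : Odd p) (hn : 0 < n)
    [NeZero (p ^ n)]
    (φ : Multiplicative (ZMod 2) →* MulAut (Multiplicative (ZMod (p ^ n))))
    (hφ : φ ≠ 1) :
    (∑ x : Multiplicative (ZMod (p ^ n)) ⋊[φ] Multiplicative (ZMod 2), orderOf x) * (p + 1)
        = p ^ (2 * n + 1) + 2 * p ^ (n + 1) + 2 * p ^ n + 1 ∧
    ((∑ x : Multiplicative (ZMod (p ^ n)) ⋊[φ] Multiplicative (ZMod 2), orderOf x : ℕ) : ℚ) /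
        (Fintype.card (Multiplicative (ZMod (p ^ n)) ⋊[φ] Multiplicative (ZMod 2)) : ℚ) ^ 2
        ≤ 13 / 36 ∧
    (((∑ x : Multiplicative (ZMod (p ^ n)) ⋊[φ] Multiplicative (ZMod 2), orderOf x : ℕ) : ℚ) /
        (Fintype.card (Multiplicative (ZMod (p ^ n)) ⋊[φ] Multiplicative (ZMod 2)) : ℚ) ^ 2
        = 13 / 36 ↔ p = 3 ∧ n = 1) := by
  have hp3 : 3 ≤ p := by
    rcases hodd with ⟨k, hk⟩
    have := hp.two_le
    omega
  -- the generator of C_2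
  set g : Multiplicative (ZMod 2) := Multiplicative.ofAdd 1 with hg
  have hg2 : ∀ x : Multiplicative (ZMod 2), x = 1 ∨ x = g := by decide
  have hgg : g * g = 1 := by decide
  have hgne : g ≠ 1 := by decide
  -- the action is inversion
  have hσne : φ g ≠ 1 := by
    intro h
    apply hφ
    apply MonoidHom.ext; intro x
    rcases hg2 x with rfl | rfl
    · simp
    · simp [h]
  have hσsq : φ g * φ g = 1 := by rw [← map_mul, hgg, map_one]
  set u : ZMod (p ^ n) := (φ g (Multiplicative.ofAdd 1)).toAdd with hu
  have huu : u * u = 1 := by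
    have h1 : φ g (φ g (Multiplicative.ofAdd 1)) = Multiplicative.ofAdd 1 := by
      have := congrArg (fun σ : MulAut (Multiplicative (ZMod (p ^ n))) =>
        σ (Multiplicative.ofAdd 1)) hσsq
      simpa using this
    have h2 := mulaut_apply_eq (p ^ n) (φ g) (φ g (Multiplicative.ofAdd 1))
    rw [h1] at h2
    have := congrArg Multiplicative.toAdd h2
    simpa using this.symm
  have hune : u ≠ 1 := by
    intro h
    apply hσne
    ext a
    rw [mulaut_apply_eq (p ^ n) (φ g) a, ← hu, h, mul_one]
    simp
  have hneg : u = -1 := zmod_sq_one p n hp hodd u huu hune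
  have hinv : ∀ a : Multiplicative (ZMod (p ^ n)), φ g a = a⁻¹ := by
    intro a
    rw [mulaut_apply_eq (p ^ n) (φ g) a, ← hu, hneg]
    apply Multiplicative.toAdd.injective
    simp [mul_comm]
  -- order computations
  have horder1 : ∀ a : Multiplicative (ZMod (p ^ n)),
      orderOf (⟨a, 1⟩ : Multiplicative (ZMod (p ^ n)) ⋊[φ] Multiplicative (ZMod 2))
        = orderOf a := fun a =>
    orderOf_injective SemidirectProduct.inl SemidirectProduct.inl_injective a
  have horder2 : ∀ a : Multiplicative (ZMod (p ^ n)),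
      orderOf (⟨a, g⟩ : Multiplicative (ZMod (p ^ n)) ⋊[φ] Multiplicative (ZMod 2)) = 2 := by
    intro a
    apply orderOf_eq_prime
    · rw [pow_two]
      ext
      · show a * φ g a = 1
        rw [hinv a, mul_inv_cancel]
      · show g * g = 1
        exact hgg
    · intro h
      exact hgne (congrArg SemidirectProduct.right h)
  -- the sum
  set G := Multiplicative (ZMod (p ^ n)) ⋊[φ] Multiplicative (ZMod 2) with hG
  let e : (Multiplicative (ZMod (p ^ n)) × Multiplicative (ZMod 2)) ≃ G :=
    { toFun := fun q => ⟨q.1, q.2⟩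
      invFun := fun x => (x.left, x.right)
      left_inv := fun _ => rfl
      right_inv := fun _ => rfl }
  have hcm : Fintype.card (Multiplicative (ZMod (p ^ n))) = p ^ n := by
    rw [Fintype.card_multiplicative]; exact ZMod.card _
  have hsum : ∑ x : G, orderOf x
      = (∑ d ∈ (p ^ n).divisors, d * d.totient) + p ^ n * 2 := by
    rw [← Equiv.sum_comp e orderOf, Fintype.sum_prod_type]
    have huniv : (Finset.univ : Finset (Multiplicative (ZMod 2))) = {1, g} := by decide
    have hrow : ∀ a : Multiplicative (ZMod (p ^ n)),
        ∑ b : Multiplicative (ZMod 2), orderOf (e (a, b)) = orderOf a + 2 := by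
      intro a
      rw [huniv, Finset.sum_pair (Ne.symm hgne)]
      show orderOf (⟨a, 1⟩ : G) + orderOf (⟨a, g⟩ : G) = orderOf a + 2
      rw [horder1 a, horder2 a]
    rw [Finset.sum_congr rfl (fun a _ => hrow a), Finset.sum_add_distrib,
      Finset.sum_const, smul_eq_mul, Finset.card_univ, hcm,
      sum_orderOf_cyclic, hcm]
  -- card
  have hcard : Fintype.card G = 2 * p ^ n := by
    rw [Fintype.card_congr e.symm, Fintype.card_prod, hcm, Fintype.card_multiplicative,
      ZMod.card]
    ring
  set S : ℕ := ∑ x : G, orderOf x with hSdef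
  clear_value S
  -- part 1
  have part1 : S * (p + 1)
      = p ^ (2 * n + 1) + 2 * p ^ (n + 1) + 2 * p ^ n + 1 := by
    rw [hsum, add_mul, geom_psi p hp n]
    ring
  -- rational setup
  have hq3 : 3 ≤ p ^ n := le_trans hp3 (Nat.le_self_pow hn.ne' p)
  have hpq : p ≤ p ^ n := Nat.le_self_pow hn.ne' p
  have hP3 : (3 : ℚ) ≤ (p : ℚ) := by exact_mod_cast hp3
  have hQ3 : (3 : ℚ) ≤ (p : ℚ) ^ n := by exact_mod_cast hq3
  have hPQ : (p : ℚ) ≤ (p : ℚ) ^ n := by exact_mod_cast hpq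
  have hQpos : (0 : ℚ) < (p : ℚ) ^ n := by linarith
  have hSQ : (S : ℚ) * ((p : ℚ) + 1)
      = (p : ℚ) * ((p:ℚ)^n)^2 + 2 * (p:ℚ) * (p:ℚ)^n + 2 * (p:ℚ)^n + 1 := by
    have hcast : ((S * (p + 1) : ℕ) : ℚ)
        = ((p ^ (2 * n + 1) + 2 * p ^ (n + 1) + 2 * p ^ n + 1 : ℕ) : ℚ) := by
      exact_mod_cast congrArg (fun k : ℕ => (k : ℚ)) part1
    push_cast at hcast
    rw [hcast]
    ring
  have hP1 : (0 : ℚ) < (p : ℚ) + 1 := by linarith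
  refine ⟨part1, ?_, ?_⟩
  · -- inequality
    rw [hcard]
    push_cast
    rw [div_le_div_iff₀ (by positivity) (by norm_num)]
    apply le_of_mul_le_mul_right _ hP1
    calc (S : ℚ) * 36 * ((p:ℚ) + 1) = 36 * ((S : ℚ) * ((p:ℚ) + 1)) := by ring
      _ = 36 * ((p : ℚ) * ((p:ℚ)^n)^2 + 2 * (p:ℚ) * (p:ℚ)^n + 2 * (p:ℚ)^n + 1) := by
          rw [hSQ]
      _ ≤ 13 * (2 * (p:ℚ)^n) ^ 2 * ((p:ℚ) + 1) := by
          have := psi_aux_le ((p:ℚ)) ((p:ℚ)^n) hP3 hPQ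
          linarith
  · -- equality iff
    rw [hcard]
    push_cast
    constructor
    · intro heq
      rw [div_eq_div_iff (by positivity) (by norm_num)] at heq
      have heq2 : 36 * ((p : ℚ) * ((p:ℚ)^n)^2 + 2 * (p:ℚ) * (p:ℚ)^n + 2 * (p:ℚ)^n + 1)
          = 13 * (2 * (p:ℚ)^n) ^ 2 * ((p:ℚ) + 1) := by
        have h36 : (S:ℚ) * 36 * ((p:ℚ)+1) = 13 * (2*(p:ℚ)^n)^2 * ((p:ℚ)+1) := by
          rw [heq]
        calc 36 * ((p : ℚ) * ((p:ℚ)^n)^2 + 2 * (p:ℚ) * (p:ℚ)^n + 2 * (p:ℚ)^n + 1)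
            = (S:ℚ) * 36 * ((p:ℚ)+1) := by rw [← hSQ]; ring
          _ = _ := h36
      by_contra hcon
      rcases Nat.lt_or_ge p 4 with hp4 | hp4
      · -- p = 3
        have hpeq : p = 3 := by omega
        have hn2 : 2 ≤ n := by
          rcases Nat.lt_or_ge n 2 with h | h
          · have hn1 : n = 1 := by omega
            exact absurd ⟨hpeq, hn1⟩ hcon
          · exact h
        have hQ9 : (9 : ℚ) ≤ (p:ℚ)^n := by
          have h2n : (p:ℚ)^2 ≤ (p:ℚ)^n := by
            apply pow_le_pow_right₀ (by linarith)
            exact hn2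
          nlinarith
        have hPeq : (p:ℚ) = 3 := by exact_mod_cast hpeq
        exact psi_aux_eq3 ((p:ℚ)^n) hQ9 (by rw [← hPeq]; exact heq2)
      · have hP4 : (4 : ℚ) ≤ (p:ℚ) := by exact_mod_cast hp4
        exact psi_aux_eq4 ((p:ℚ)) ((p:ℚ)^n) hP4 hPQ heq2
    · rintro ⟨hpeq, hneq⟩
      have hS13 : S = 13 := by
        rw [hpeq, hneq] at part1
        norm_num at part1
        omega
      rw [hS13, hpeq, hneq]
      norm_num
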